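/- Let (R_k)_{k∈S} be a family of commutative rings and R = ∏_{k∈S} R_k their direct product. Then the total ring of fractions T(R) is canonically isomorphic to ∏_{k∈S} T(R_k). -/

import Mathlib

open nonZeroDivisors

lemma pi_mem_nonZeroDivisors {S : Type*} {R : S → Type*} [∀ k, CommRing (R k)]
    {m : ∀ k, R k} (h : ∀ k, m k ∈ (R k)⁰) : m ∈ (∀ k, R k)⁰ := by
  rw [mem_nonZeroDivisors_iff_right]
  intro x hx
  funext k
  exact mem_nonZeroDivisors_iff_right.mp (h k) (x k) (congrFun hx k)

lemma pi_nonZeroDivisors_apply {S : Type*} {R : S → Type*} [∀ k, CommRing (R k)]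
    {m : ∀ k, R k} (h : m ∈ (∀ k, R k)⁰) (k : S) : m k ∈ (R k)⁰ := by
  classical
  rw [mem_nonZeroDivisors_iff_right] at h ⊢
  intro x hx
  by_contra hx0
  have : (fun j => if hj : j = k then hj ▸ x else 0) * m = 0 := by
    funext j
    by_cases hj : j = k
    · subst hj; simpa [mul_comm] using hx
    · simp [hj]
  have := h _ this
  apply hx0
  have := congrFun this k
  simpa using this

theorem stmt_1 {S : Type*} (R : S → Type*) [∀ k, CommRing (R k)] :
    ∃ e : FractionRing (∀ k, R k) ≃+* (∀ k, FractionRing (R k)),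
      ∀ x : ∀ k, R k,
        e (algebraMap (∀ k, R k) (FractionRing (∀ k, R k)) x) =
          fun k => algebraMap (R k) (FractionRing (R k)) (x k) := by
  letI : Algebra (∀ k, R k) (∀ k, FractionRing (R k)) :=
    (Pi.ringHom (fun k =>
      (algebraMap (R k) (FractionRing (R k))).comp (Pi.evalRingHom R k))).toAlgebra
  have halg : ∀ (x : ∀ k, R k) (k : S),
      algebraMap (∀ k, R k) (∀ k, FractionRing (R k)) x k
        = algebraMap (R k) (FractionRing (R k)) (x k) := fun x k => rfl
  haveI : IsLocalization (∀ k, R k)⁰ (∀ k, FractionRing (R k)) := by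
    rw [isLocalization_iff]; refine ⟨?_, ?_, ?_⟩
    · rintro ⟨m, hm⟩
      have hu : ∀ k, IsUnit (algebraMap (R k) (FractionRing (R k)) (m k)) :=
        fun k => IsLocalization.map_units _ ⟨m k, pi_nonZeroDivisors_apply hm k⟩
      choose g hg using fun k => (hu k)
      exact IsUnit.of_mul_eq_one (fun k => ((g k)⁻¹ : _))
        (funext fun k => by
          simp only [Pi.mul_apply, Pi.one_apply]
          rw [halg, ← hg k]; exact (g k).mul_inv)
    · intro z
      have := fun k => IsLocalization.surj (M := (R k)⁰) (z k)
      choose p hp using this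
      refine ⟨⟨fun k => (p k).1, ⟨fun k => ((p k).2 : R k),
        pi_mem_nonZeroDivisors fun k => (p k).2.2⟩⟩, funext fun k => ?_⟩
      simpa [halg] using hp k
    · intro x y h
      have h' : ∀ k, algebraMap (R k) (FractionRing (R k)) (x k)
          = algebraMap (R k) (FractionRing (R k)) (y k) := fun k => congrFun h k
      have := fun k => IsLocalization.exists_of_eq (M := (R k)⁰) (h' k)
      choose c hc using this
      exact ⟨⟨fun k => (c k : R k), pi_mem_nonZeroDivisors fun k => (c k).2⟩,
        funext fun k => hc k⟩
  refine ⟨(IsLocalization.algEquiv (∀ k, R k)⁰ (FractionRing (∀ k, R k))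
    (∀ k, FractionRing (R k))).toRingEquiv, fun x => ?_⟩
  funext k
  have := (IsLocalization.algEquiv (∀ k, R k)⁰ (FractionRing (∀ k, R k))
    (∀ k, FractionRing (R k))).commutes x
  exact (congrFun this k).trans (halg x k)
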